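/- arXiv:2403.04658 — 3 statements merged into one kernel-verified Lean document; each statement's English description precedes it below -/
import Mathlib

section
/- Let b be a geometric structure on ℝⁿ with geometric pair (b, B). Then the following are equivalent: (1) for every f ∈ 𝒮(ℝⁿ) and every x ∈ ℝⁿ, (𝓕ᴸ_b (𝓕ᴸ_b f))(x) = |det B| · f(x); (2) n is even and b is skew-symmetric, i.e. b(x, y) = -b(y, x) for all x, y ∈ ℝⁿ (i.e. b is a symplectic structure). The same equivalence holds with 𝓕ᴿ_b in place of 𝓕ᴸ_b. -/
open MeasureTheory Complex
open scoped RealInnerProductSpace FourierTransform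

noncomputable section

/-- The left Fourier transform associated to a bilinear form `b` on `ℝⁿ`:
`(𝓕ᴸ_b f)(ξ) = ∫ e^{-2πi b(ξ,x)} f(x) dx`. -/
def fourierL {n : ℕ} (b : EuclideanSpace ℝ (Fin n) →ₗ[ℝ] EuclideanSpace ℝ (Fin n) →ₗ[ℝ] ℝ)
    (f : EuclideanSpace ℝ (Fin n) → ℂ) (ξ : EuclideanSpace ℝ (Fin n)) : ℂ :=
  ∫ x : EuclideanSpace ℝ (Fin n),
    Complex.exp (-(2 * Real.pi * Complex.I) * (b ξ x : ℂ)) * f x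

/-- The right Fourier transform associated to a bilinear form `b` on `ℝⁿ`:
`(𝓕ᴿ_b f)(ξ) = ∫ e^{-2πi b(x,ξ)} f(x) dx`. -/
def fourierR {n : ℕ} (b : EuclideanSpace ℝ (Fin n) →ₗ[ℝ] EuclideanSpace ℝ (Fin n) →ₗ[ℝ] ℝ)
    (f : EuclideanSpace ℝ (Fin n) → ℂ) (ξ : EuclideanSpace ℝ (Fin n)) : ℂ :=
  ∫ x : EuclideanSpace ℝ (Fin n),
    Complex.exp (-(2 * Real.pi * Complex.I) * (b x ξ : ℂ)) * f x

namespace Stmt3Aux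

variable {n : ℕ}

local notation "E" => EuclideanSpace ℝ (Fin n)

/-- A smooth compactly supported function is Schwartz. -/
def ofCompactSupport {f : E → ℂ} (h1 : ContDiff ℝ ((⊤ : ℕ∞)) f) (h2 : HasCompactSupport f) :
    SchwartzMap E ℂ where
  toFun := f
  smooth' := h1
  decay' := by
    intro k m
    have hg : Continuous fun x : E => ‖x‖ ^ k * ‖iteratedFDeriv ℝ m f x‖ :=
      ((continuous_norm.pow k).mul (h1.continuous_iteratedFDeriv (mod_cast le_top)).norm)
    have hs : HasCompactSupport fun x : E => ‖x‖ ^ k * ‖iteratedFDeriv ℝ m f x‖ :=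
      ((h2.iteratedFDeriv m).norm).mul_left
    obtain ⟨C, hC⟩ := hs.exists_bound_of_continuous hg
    refine ⟨C, fun x => ?_⟩
    have := hC x
    rwa [Real.norm_eq_abs, _root_.abs_of_nonneg (by positivity)] at this

/-- Schwartz functions separate points. -/
lemma eq_of_schwartz {v w : E}
    (h : ∀ f : SchwartzMap E ℂ, f v = f w) : v = w := by
  by_contra hvw
  have hd : (0 : ℝ) < dist w v := dist_pos.2 (Ne.symm hvw)
  set bump : ContDiffBump v := ⟨dist w v / 2, dist w v, by positivity, by linarith⟩ with hbump
  have hsm : ContDiff ℝ ((⊤ : ℕ∞)) fun x : E => ((bump x : ℝ) : ℂ) :=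
    (Complex.ofRealCLM.contDiff (n := ((⊤ : ℕ∞) : WithTop ℕ∞))).comp bump.contDiff
  have hcs : HasCompactSupport fun x : E => ((bump x : ℝ) : ℂ) :=
    bump.hasCompactSupport.comp_left (g := fun r : ℝ => (r : ℂ)) (by simp)
  have h1 : (ofCompactSupport hsm hcs) v = 1 := by
    show ((bump v : ℝ) : ℂ) = 1
    rw [bump.one_of_mem_closedBall (Metric.mem_closedBall_self (by positivity))]
    norm_num
  have h2 : (ofCompactSupport hsm hcs) w = 0 := by
    show ((bump w : ℝ) : ℂ) = 0
    rw [bump.zero_of_le_dist (le_of_eq rfl)]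
    norm_num
  have := h (ofCompactSupport hsm hcs)
  rw [h1, h2] at this
  exact one_ne_zero this

/-- Change of variables by a linear equivalence. -/
lemma integral_comp_linearEquiv (A : E ≃ₗ[ℝ] E) (g : E → ℂ) :
    ∫ x, g (A x) = |LinearMap.det (A : E →ₗ[ℝ] E)|⁻¹ • ∫ y, g y := by
  have hd : LinearMap.det (A : E →ₗ[ℝ] E) ≠ 0 := (LinearEquiv.isUnit_det' A).ne_zero
  have hmap : Measure.map (A : E →ₗ[ℝ] E) volume
      = ENNReal.ofReal |(LinearMap.det (A : E →ₗ[ℝ] E))⁻¹| • volume :=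
    Measure.map_linearMap_addHaar_eq_smul_addHaar volume hd
  set e : E ≃ᵐ E := A.toContinuousLinearEquiv.toHomeomorph.toMeasurableEquiv with he
  have hfun : ⇑e = ⇑(A : E →ₗ[ℝ] E) := rfl
  have step := MeasureTheory.integral_map_equiv (μ := volume) e g
  rw [hfun, hmap, integral_smul_measure, ENNReal.toReal_ofReal (abs_nonneg _), abs_inv] at step
  rw [show (∫ x, g (A x)) = ∫ x, g ((A : E →ₗ[ℝ] E) x) from rfl, ← step]

/-- The double Fourier transform twisted by a linear equivalence. -/
lemma double (A : E ≃ₗ[ℝ] E) (f : SchwartzMap E ℂ) (w : E) :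
    𝓕 (fun v => 𝓕 (⇑f) (A v)) w =
      |LinearMap.det (A : E →ₗ[ℝ] E)|⁻¹ •
        f (-(LinearMap.adjoint (A.symm : E →ₗ[ℝ] E) w)) := by
  set w' : E := LinearMap.adjoint (A.symm : E →ₗ[ℝ] E) w with hw'
  have hinner : ∀ v : E, ⟪v, w⟫ = ⟪A v, w'⟫ := by
    intro v
    rw [hw', LinearMap.adjoint_inner_right]
    simp
  calc 𝓕 (fun v => 𝓕 (⇑f) (A v)) w
      = ∫ v, (𝐞 (-⟪v, w⟫) : Circle) • 𝓕 (⇑f) (A v) := Real.fourier_eq _ _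
    _ = ∫ v, (𝐞 (-⟪A v, w'⟫) : Circle) • 𝓕 (⇑f) (A v) := by simp_rw [hinner]
    _ = |LinearMap.det (A : E →ₗ[ℝ] E)|⁻¹ • ∫ u, (𝐞 (-⟪u, w'⟫) : Circle) • 𝓕 (⇑f) u := by
        exact integral_comp_linearEquiv A (fun u => (𝐞 (-⟪u, w'⟫) : Circle) • 𝓕 (⇑f) u)
    _ = |LinearMap.det (A : E →ₗ[ℝ] E)|⁻¹ • 𝓕 (𝓕 (⇑f)) w' := by rw [← Real.fourier_eq]
    _ = |LinearMap.det (A : E →ₗ[ℝ] E)|⁻¹ • f (-w') := by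
        have h2 : 𝓕 (𝓕 (⇑f)) w' = 𝓕⁻ (𝓕 (⇑f)) (-w') := by
          rw [Real.fourierInv_eq_fourier_neg, neg_neg]
        rw [h2, Continuous.fourierInv_fourier_eq f.continuous f.integrable
          ((SchwartzMap.fourierTransformCLM ℂ f).integrable)]

/-- The core equivalence. -/
lemma core (A : E ≃ₗ[ℝ] E) (c : ℝ) (hc : |LinearMap.det (A : E →ₗ[ℝ] E)|⁻¹ = c) :
    (∀ f : SchwartzMap E ℂ, ∀ x : E, 𝓕 (fun v => 𝓕 (⇑f) (A v)) (A x) = (c : ℂ) * f x)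
      ↔ ∀ x : E, LinearMap.adjoint (A.symm : E →ₗ[ℝ] E) (A x) = -x := by
  have hc0 : c ≠ 0 := by
    rw [← hc]
    simp [(LinearEquiv.isUnit_det' A).ne_zero]
  constructor
  · intro H x
    have key : ∀ f : SchwartzMap E ℂ,
        f (-(LinearMap.adjoint (A.symm : E →ₗ[ℝ] E) (A x))) = f x := by
      intro f
      have h2 := (double A f (A x)).symm.trans (H f x)
      rw [hc, Complex.real_smul] at h2
      exact mul_left_cancel₀ (by exact_mod_cast hc0) h2
    exact neg_eq_iff_eq_neg.1 (eq_of_schwartz key)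
  · intro H f x
    rw [double A f (A x), H x, neg_neg, hc, Complex.real_smul]

lemma det_adjoint (f : E →ₗ[ℝ] E) :
    LinearMap.det (LinearMap.adjoint f) = LinearMap.det f := by
  let v : OrthonormalBasis (Fin n) ℝ (EuclideanSpace ℝ (Fin n)) := EuclideanSpace.basisFun (Fin n) ℝ
  rw [← LinearMap.det_toMatrix v.toBasis (LinearMap.adjoint f), ← LinearMap.det_toMatrix v.toBasis f,
    LinearMap.toMatrix_adjoint]
  rw [Matrix.det_conjTranspose]
  simp

lemma even_of_skew (C : E →ₗ[ℝ] E) (hC : LinearMap.det C ≠ 0)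
    (h : LinearMap.adjoint C = -C) : Even n := by
  have h1 : LinearMap.det C = (-1 : ℝ) ^ n * LinearMap.det C := by
    conv_lhs => rw [← det_adjoint C, h]
    rw [show -C = (-1 : ℝ) • C by simp, LinearMap.det_smul]
    simp [finrank_euclideanSpace_fin]
  have h2 : ((-1 : ℝ) ^ n) = 1 := by
    have h3 : (1 - (-1 : ℝ) ^ n) * LinearMap.det C = 0 := by ring_nf; linarith [h1]
    rcases mul_eq_zero.1 h3 with h4 | h4
    · linarith
    · exact absurd h4 hC
  exact (neg_one_pow_eq_one_iff_even (by norm_num)).1 h2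

lemma adjoint_id : LinearMap.adjoint (LinearMap.id : E →ₗ[ℝ] E) = LinearMap.id := by
  rw [← Module.End.one_eq_id, ← LinearMap.star_eq_adjoint, star_one]

end Stmt3Aux

/-- `𝓕ᴸ_b ∘ 𝓕ᴸ_b = |det B| · id` on Schwartz functions iff `n` is even and
`b` is skew-symmetric (i.e. symplectic); and the same with `𝓕ᴿ_b`. -/
theorem stmt3 {n : ℕ} (hn : 1 ≤ n)
    (b : EuclideanSpace ℝ (Fin n) →ₗ[ℝ] EuclideanSpace ℝ (Fin n) →ₗ[ℝ] ℝ)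
    (hb : ∀ x : EuclideanSpace ℝ (Fin n), (∀ y, b x y = 0) → x = 0)
    (B : EuclideanSpace ℝ (Fin n) ≃ₗ[ℝ] EuclideanSpace ℝ (Fin n))
    (hpair : ∀ x y : EuclideanSpace ℝ (Fin n), ⟪x, y⟫ = b x (B y)) :
    ((∀ f : SchwartzMap (EuclideanSpace ℝ (Fin n)) ℂ, ∀ x : EuclideanSpace ℝ (Fin n),
        fourierL b (fourierL b ⇑f) x =
          ((|LinearMap.det (B : EuclideanSpace ℝ (Fin n) →ₗ[ℝ] EuclideanSpace ℝ (Fin n))| : ℝ) : ℂ)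
            * f x) ↔
      (Even n ∧ ∀ x y : EuclideanSpace ℝ (Fin n), b x y = - b y x)) ∧
    ((∀ f : SchwartzMap (EuclideanSpace ℝ (Fin n)) ℂ, ∀ x : EuclideanSpace ℝ (Fin n),
        fourierR b (fourierR b ⇑f) x =
          ((|LinearMap.det (B : EuclideanSpace ℝ (Fin n) →ₗ[ℝ] EuclideanSpace ℝ (Fin n))| : ℝ) : ℂ)
            * f x) ↔
      (Even n ∧ ∀ x y : EuclideanSpace ℝ (Fin n), b x y = - b y x)) := by
  classical
  set E := EuclideanSpace ℝ (Fin n)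
  set C : E →ₗ[ℝ] E := (B.symm : E →ₗ[ℝ] E) with hCdef
  have hbC : ∀ x y : E, b x y = ⟪x, C y⟫ := by
    intro x y
    have h := hpair x (B.symm y)
    rw [LinearEquiv.apply_symm_apply] at h
    exact h.symm
  have hdetC : LinearMap.det C ≠ 0 := (LinearEquiv.isUnit_det' B.symm).ne_zero
  have hdetB : LinearMap.det (B : E →ₗ[ℝ] E) ≠ 0 := (LinearEquiv.isUnit_det' B).ne_zero
  -- composition identities for adjoints
  have hBC : ((B : E →ₗ[ℝ] E).comp C) = LinearMap.id := by
    ext x; simp [hCdef]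
  have hCB : (C.comp (B : E →ₗ[ℝ] E)) = LinearMap.id := by
    ext x; simp [hCdef]
  have hadj1 : (LinearMap.adjoint C).comp (LinearMap.adjoint (B : E →ₗ[ℝ] E)) = LinearMap.id := by
    rw [← LinearMap.adjoint_comp, hBC, Stmt3Aux.adjoint_id]
  have hadj2 : (LinearMap.adjoint (B : E →ₗ[ℝ] E)).comp (LinearMap.adjoint C) = LinearMap.id := by
    rw [← LinearMap.adjoint_comp, hCB, Stmt3Aux.adjoint_id]
  -- the skew condition
  have skew_iff : (LinearMap.adjoint C = -C) ↔ (∀ x y : E, b x y = -b y x) := by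
    constructor
    · intro h x y
      rw [hbC x y, hbC y x, ← LinearMap.adjoint_inner_left, h]
      simp [real_inner_comm]
    · intro h
      refine LinearMap.ext fun x => ?_
      rw [LinearMap.neg_apply]
      refine ext_inner_right ℝ fun y => ?_
      rw [LinearMap.adjoint_inner_left, ← hbC, h x y, hbC y x, inner_neg_left,
        real_inner_comm y (C x)]
  -- the left-transform linear equivalence
  set AL : E ≃ₗ[ℝ] E := LinearEquiv.ofLinear (LinearMap.adjoint C)
    (LinearMap.adjoint (B : E →ₗ[ℝ] E)) hadj1 hadj2 with hAL
  have hALcoe : (AL : E →ₗ[ℝ] E) = LinearMap.adjoint C := rfl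
  have hALsymm : (AL.symm : E →ₗ[ℝ] E) = LinearMap.adjoint (B : E →ₗ[ℝ] E) := rfl
  set AR : E ≃ₗ[ℝ] E := B.symm with hAR
  have hARcoe : (AR : E →ₗ[ℝ] E) = C := rfl
  have hARsymm : (AR.symm : E →ₗ[ℝ] E) = (B : E →ₗ[ℝ] E) := rfl
  -- constants
  have hcL : |LinearMap.det (AL : E →ₗ[ℝ] E)|⁻¹ = |LinearMap.det (B : E →ₗ[ℝ] E)| := by
    rw [hALcoe, Stmt3Aux.det_adjoint, hCdef, LinearEquiv.det_coe_symm, abs_inv, inv_inv]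
  have hcR : |LinearMap.det (AR : E →ₗ[ℝ] E)|⁻¹ = |LinearMap.det (B : E →ₗ[ℝ] E)| := by
    rw [hARcoe, hCdef, LinearEquiv.det_coe_symm, abs_inv, inv_inv]
  -- rewriting the transforms
  have hDL : ∀ ξ x : E, b ξ x = ⟪x, (LinearMap.adjoint C) ξ⟫ := by
    intro ξ x
    rw [LinearMap.adjoint_inner_right, hbC, real_inner_comm]
  have hLtwist : ∀ (g : E → ℂ) (ξ : E), fourierL b g ξ = 𝓕 g ((LinearMap.adjoint C) ξ) := by
    intro g ξ
    rw [Real.fourier_eq', fourierL]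
    congr 1
    ext x
    rw [smul_eq_mul, ← hDL]
    congr 1
    push_cast
    ring
  have hRtwist : ∀ (g : E → ℂ) (ξ : E), fourierR b g ξ = 𝓕 g (C ξ) := by
    intro g ξ
    rw [Real.fourier_eq', fourierR]
    congr 1
    ext x
    rw [smul_eq_mul, ← hbC]
    congr 1
    push_cast
    ring
  -- conditions
  have condL : (∀ x : E, LinearMap.adjoint (AL.symm : E →ₗ[ℝ] E) (AL x) = -x)
      ↔ LinearMap.adjoint C = -C := by
    rw [hALsymm, LinearMap.adjoint_adjoint]
    constructor
    · intro h
      refine LinearMap.ext fun x => ?_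
      rw [LinearMap.neg_apply]
      have h2 := h x
      have hALapp : AL x = LinearMap.adjoint C x := rfl
      rw [hALapp] at h2
      have h4 := congrArg B.symm h2
      simp only [LinearEquiv.coe_coe, LinearEquiv.symm_apply_apply, map_neg] at h4
      rw [h4]
      rfl
    · intro h x
      have hALapp : AL x = LinearMap.adjoint C x := rfl
      rw [hALapp, h, LinearMap.neg_apply, map_neg]
      have h5 : (B : E →ₗ[ℝ] E) (C x) = x := LinearMap.congr_fun hBC x
      rw [h5]
  have condR : (∀ x : E, LinearMap.adjoint (AR.symm : E →ₗ[ℝ] E) (AR x) = -x)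
      ↔ LinearMap.adjoint C = -C := by
    rw [hARsymm]
    constructor
    · intro h
      refine LinearMap.ext fun x => ?_
      rw [LinearMap.neg_apply]
      have h2 := congrArg (LinearMap.adjoint C) (h x)
      rw [show (AR : E → E) x = C x from rfl] at h2
      have h3 : LinearMap.adjoint C (LinearMap.adjoint (B : E →ₗ[ℝ] E) (C x)) = C x := by
        have := congrFun (congrArg DFunLike.coe hadj1) (C x)
        simpa using this
      rw [h3, map_neg] at h2
      rw [h2, neg_neg]
    · intro h x
      have h2 : (AR : E → E) x = C x := rfl
      rw [h2]
      have h3 : C x = LinearMap.adjoint C (-x) := by rw [h, map_neg]; simp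
      rw [h3]
      have := congrFun (congrArg DFunLike.coe hadj2) (-x)
      exact this
  -- assemble
  constructor
  · -- left
    have hrw : ∀ (f : SchwartzMap E ℂ) (x : E),
        fourierL b (fourierL b ⇑f) x = 𝓕 (fun v => 𝓕 (⇑f) (AL v)) (AL x) := by
      intro f x
      rw [hLtwist (fourierL b ⇑f) x]
      congr 1
      refine congrArg (fun g : E → ℂ => 𝓕 g (AL x)) (funext fun v => ?_)
      exact hLtwist (⇑f) v
    constructor
    · intro H
      have H' : ∀ f : SchwartzMap E ℂ, ∀ x : E,
          𝓕 (fun v => 𝓕 (⇑f) (AL v)) (AL x)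
            = ((|LinearMap.det (B : E →ₗ[ℝ] E)| : ℝ) : ℂ) * f x := by
        intro f x
        rw [← hrw]
        exact H f x
      have hskew := condL.1 ((Stmt3Aux.core AL _ hcL).1 H')
      exact ⟨Stmt3Aux.even_of_skew C hdetC hskew, skew_iff.1 hskew⟩
    · rintro ⟨-, hskew⟩
      have hadj := skew_iff.2 hskew
      have H' := (Stmt3Aux.core AL _ hcL).2 (condL.2 hadj)
      intro f x
      rw [hrw f x]
      exact H' f x
  · -- right
    have hrw : ∀ (f : SchwartzMap E ℂ) (x : E),
        fourierR b (fourierR b ⇑f) x = 𝓕 (fun v => 𝓕 (⇑f) (AR v)) (AR x) := by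
      intro f x
      rw [hRtwist (fourierR b ⇑f) x]
      congr 1
      refine congrArg (fun g : E → ℂ => 𝓕 g (AR x)) (funext fun v => ?_)
      exact hRtwist (⇑f) v
    constructor
    · intro H
      have H' : ∀ f : SchwartzMap E ℂ, ∀ x : E,
          𝓕 (fun v => 𝓕 (⇑f) (AR v)) (AR x)
            = ((|LinearMap.det (B : E →ₗ[ℝ] E)| : ℝ) : ℂ) * f x := by
        intro f x
        rw [← hrw]
        exact H f x
      have hskew := condR.1 ((Stmt3Aux.core AR _ hcR).1 H')
      exact ⟨Stmt3Aux.even_of_skew C hdetC hskew, skew_iff.1 hskew⟩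
    · rintro ⟨-, hskew⟩
      have hadj := skew_iff.2 hskew
      have H' := (Stmt3Aux.core AR _ hcR).2 (condR.2 hadj)
      intro f x
      rw [hrw f x]
      exact H' f x
end
end

section
/- Let b be a geometric structure on ℝⁿ with geometric pair (b, B). Then for every f ∈ 𝒮(ℝⁿ) and every m ∈ ℕ: ∫_{ℝⁿ} |(Δ_b^m f)(x)|² dx = (2π)^{4m} · |det B|⁻¹ · ∫_{ℝⁿ} b(ξ,ξ)^{2m} · |(𝓕ᴸ_b f)(ξ)|² dξ, and the same identity holds with 𝓕ᴿ_b in place of 𝓕ᴸ_b. -/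
open MeasureTheory Complex
open scoped RealInnerProductSpace FourierTransform

noncomputable section

/-- The `b`-Laplace operator `Δ_b g = Σ_{k,l} b_{kl} ∂_k ∂_l g`, where
`b_{kl} = ⟪e_k, B e_l⟫` are the entries of the matrix of `B` in the canonical basis. -/
def bLap {n : ℕ} (B : EuclideanSpace ℝ (Fin n) ≃ₗ[ℝ] EuclideanSpace ℝ (Fin n))
    (g : EuclideanSpace ℝ (Fin n) → ℂ) (x : EuclideanSpace ℝ (Fin n)) : ℂ :=
  ∑ k : Fin n, ∑ l : Fin n,
    ((⟪EuclideanSpace.single k (1 : ℝ), B (EuclideanSpace.single l (1 : ℝ))⟫ : ℝ) : ℂ) *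
      fderiv ℝ (fun y => fderiv ℝ g y (EuclideanSpace.single l (1 : ℝ))) x
        (EuclideanSpace.single k (1 : ℝ))


section Aux

open SchwartzMap

variable {n : ℕ}

local notation "𝓔" => EuclideanSpace ℝ (Fin n)


lemma my_innerl_flip : (innerₗ 𝓔).flip = innerₗ 𝓔 := by
  apply LinearMap.ext; intro x; apply LinearMap.ext; intro y
  exact real_inner_comm x y

lemma my_fourier_conj (g : 𝓔 → ℂ) (x : 𝓔) :
    𝓕 (fun v => (starRingEnd ℂ) (g v)) x = (starRingEnd ℂ) (𝓕⁻ g x) := by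
  rw [Real.fourier_eq, Real.fourierInv_eq, ← integral_conj]
  congr 1; ext v
  simp only [Circle.smul_def, smul_eq_mul, map_mul, Real.fourierChar_apply,
    ← Complex.exp_conj, map_mul, Complex.conj_ofReal, Complex.conj_I]
  congr 2
  push_cast
  ring

lemma my_plancherel (f : SchwartzMap 𝓔 ℂ) :
    ∫ ξ : 𝓔, ‖𝓕 (⇑f) ξ‖ ^ 2 = ∫ x : 𝓔, ‖f x‖ ^ 2 := by
  have hFS : ⇑(fourierTransformCLM ℂ f) = 𝓕 ⇑f := rfl
  have hFf : Integrable (𝓕 ⇑f) := by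
    rw [← hFS]; exact (fourierTransformCLM ℂ f).integrable
  have hg : Integrable (fun v : 𝓔 => (starRingEnd ℂ) (𝓕 ⇑f v)) := by
    apply (Complex.conjLIE.toLinearIsometry.toContinuousLinearMap).integrable_comp hFf
  have key := VectorFourier.integral_fourierIntegral_smul_eq_flip (L := innerₗ 𝓔)
    (μ := volume) (ν := volume) Real.continuous_fourierChar
    (by exact continuous_inner) f.integrable hg
  rw [my_innerl_flip] at key
  have h1 : ∀ x : 𝓔, VectorFourier.fourierIntegral 𝐞 volume (innerₗ 𝓔)
      (fun v => (starRingEnd ℂ) (𝓕 ⇑f v)) x = (starRingEnd ℂ) (f x) := by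
    intro x
    have := my_fourier_conj (𝓕 ⇑f) x
    rw [show ∀ g : 𝓔 → ℂ, 𝓕 g = VectorFourier.fourierIntegral 𝐞 volume (innerₗ 𝓔) g from fun _ => rfl] at this
    rw [this, Continuous.fourierInv_fourier_eq f.continuous f.integrable hFf]
  simp only [h1] at key
  have lhs : ∀ ξ : 𝓔, VectorFourier.fourierIntegral 𝐞 volume (innerₗ 𝓔) (⇑f) ξ •
      ((starRingEnd ℂ) (𝓕 ⇑f ξ)) = ((‖𝓕 ⇑f ξ‖^2 : ℝ) : ℂ) := by
    intro ξ
    show (𝓕 ⇑f ξ) • ((starRingEnd ℂ) (𝓕 ⇑f ξ)) = ((‖𝓕 ⇑f ξ‖^2 : ℝ) : ℂ)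
    rw [smul_eq_mul, Complex.mul_conj, Complex.normSq_eq_norm_sq]
  have rhs : ∀ x : 𝓔, (f x) • ((starRingEnd ℂ) (f x)) = ((‖f x‖^2 : ℝ) : ℂ) := by
    intro x; rw [smul_eq_mul, Complex.mul_conj, Complex.normSq_eq_norm_sq]
  simp only [lhs, rhs] at key
  have cast1 : ∀ (h : 𝓔 → ℝ), ∫ x : 𝓔, ((h x : ℝ) : ℂ) = ((∫ x : 𝓔, h x : ℝ) : ℂ) :=
    fun h => integral_ofReal
  rw [cast1, cast1] at key
  exact Complex.ofReal_injective key

lemma my_fourier_pderiv (f : SchwartzMap 𝓔 ℂ) (v ξ : 𝓔) :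
    𝓕 (fun x => fderiv ℝ (⇑f) x v) ξ
      = (2 * Real.pi * Complex.I) * ((⟪v, ξ⟫ : ℝ) : ℂ) * 𝓕 (⇑f) ξ := by
  have hder : Integrable (fderiv ℝ (⇑f)) (volume : Measure 𝓔) := by
    have : ⇑(SchwartzMap.fderivCLM ℝ 𝓔 ℂ f) = fderiv ℝ (⇑f) := rfl
    rw [← this]; exact (SchwartzMap.fderivCLM ℝ 𝓔 ℂ f).integrable
  rw [← Real.fourier_continuousLinearMap_apply hder,
    Real.fourier_fderiv f.integrable ((f.smooth 1).differentiable one_ne_zero) hder]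
  simp only [VectorFourier.fourierSMulRight_apply, ContinuousLinearMap.neg_apply,
    innerSL_apply_apply, neg_smul, smul_eq_mul]
  rw [real_inner_comm, show ((innerSL ℝ) ξ) v = ⟪ξ, v⟫ from rfl]
  push_cast
  ring_nf
  simp [Complex.ext_iff]
  ring_nf
  constructor <;> trivial

lemma my_quad (B : 𝓔 ≃ₗ[ℝ] 𝓔) (ξ : 𝓔) :
    ∑ k : Fin n, ∑ l : Fin n,
      (⟪EuclideanSpace.single k (1:ℝ), B (EuclideanSpace.single l (1:ℝ))⟫ : ℝ) * ξ k * ξ l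
      = ⟪ξ, B ξ⟫ := by
  have hx : ∑ l : Fin n, ξ l • EuclideanSpace.single l (1:ℝ) = ξ := by
    simpa [EuclideanSpace.basisFun_apply] using
      (EuclideanSpace.basisFun (Fin n) ℝ).sum_repr ξ
  have hBξ : ∀ k, B ξ k = ∑ l, ξ l * B (EuclideanSpace.single l (1:ℝ)) k := by
    intro k
    conv_lhs => rw [← hx]
    rw [map_sum]
    have : ∀ (g : Fin n → 𝓔), (∑ i, g i) k = ∑ i, g i k := by
      intro g
      induction (Finset.univ : Finset (Fin n)) using Finset.induction_on with
      | empty => rfl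
      | insert _ _ h ih => rw [Finset.sum_insert h, Finset.sum_insert h, ← ih]; rfl
    rw [this]
    refine Finset.sum_congr rfl fun i _ => by rw [_root_.map_smul]; rfl
  simp only [PiLp.inner_apply, RCLike.inner_apply, starRingEnd_apply, star_trivial,
    EuclideanSpace.single_apply, hBξ]
  simp only [mul_ite, mul_one, mul_zero, ite_mul, one_mul, zero_mul, Finset.sum_ite_eq, Finset.sum_ite_eq',
    Finset.mem_univ, if_true]
  refine Finset.sum_congr rfl fun k _ => ?_
  rw [Finset.sum_mul]
  refine Finset.sum_congr rfl fun k _ => ?_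
  ring

def bLapS (B : 𝓔 ≃ₗ[ℝ] 𝓔) (f : SchwartzMap 𝓔 ℂ) : SchwartzMap 𝓔 ℂ :=
  ∑ k : Fin n, ∑ l : Fin n,
    ((⟪EuclideanSpace.single k (1 : ℝ), B (EuclideanSpace.single l (1 : ℝ))⟫ : ℝ) : ℂ) •
      LineDeriv.lineDerivOpCLM ℝ (SchwartzMap 𝓔 ℂ) (EuclideanSpace.single k (1:ℝ))
        (LineDeriv.lineDerivOpCLM ℝ (SchwartzMap 𝓔 ℂ) (EuclideanSpace.single l (1:ℝ)) f)

lemma bLapS_coe (B : 𝓔 ≃ₗ[ℝ] 𝓔) (f : SchwartzMap 𝓔 ℂ) :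
    ⇑(bLapS B f) = bLap B ⇑f := by
  funext x
  unfold bLapS bLap
  rw [← SchwartzMap.coe_coeHom, map_sum]
  simp only [Finset.sum_apply]
  refine Finset.sum_congr rfl fun k _ => ?_
  rw [map_sum]
  simp only [Finset.sum_apply]
  refine Finset.sum_congr rfl fun l _ => ?_
  rw [SchwartzMap.coe_coeHom]
  rw [SchwartzMap.smul_apply, show ∀ (v : 𝓔) (g : SchwartzMap 𝓔 ℂ) y, LineDeriv.lineDerivOpCLM ℝ (SchwartzMap 𝓔 ℂ) v g y = fderiv ℝ g y v from fun _ _ _ => rfl]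
  have hcoe : ⇑(LineDeriv.lineDerivOpCLM ℝ (SchwartzMap 𝓔 ℂ) (EuclideanSpace.single l (1:ℝ)) f)
      = fun y => fderiv ℝ (⇑f) y (EuclideanSpace.single l (1:ℝ)) := rfl
  rw [hcoe, smul_eq_mul]

lemma bLapS_iterate_coe (B : 𝓔 ≃ₗ[ℝ] 𝓔) (f : SchwartzMap 𝓔 ℂ) (m : ℕ) :
    ⇑((bLapS B)^[m] f) = (bLap B)^[m] ⇑f := by
  induction m with
  | zero => rfl
  | succ m ih =>
      rw [Function.iterate_succ_apply', Function.iterate_succ_apply', bLapS_coe, ih]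

lemma my_fourier_bLapS (B : 𝓔 ≃ₗ[ℝ] 𝓔) (f : SchwartzMap 𝓔 ℂ) (ξ : 𝓔) :
    𝓕 ⇑(bLapS B f) ξ = ((-((2 * Real.pi)^2) * ⟪ξ, B ξ⟫ : ℝ) : ℂ) * 𝓕 (⇑f) ξ := by
  have hFT : (fourierTransformCLM ℂ (bLapS B f) : 𝓔 → ℂ) = 𝓕 ⇑(bLapS B f) := rfl
  rw [← hFT]
  unfold bLapS
  rw [map_sum, ← SchwartzMap.coe_coeHom, map_sum]
  simp only [Finset.sum_apply]
  have hterm : ∀ k l : Fin n,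
      (SchwartzMap.coeHom (SchwartzMap 𝓔 ℂ) 𝓔 ℂ) ((fourierTransformCLM ℂ)
        (∑ l' : Fin n, ((⟪EuclideanSpace.single k (1 : ℝ),
            B (EuclideanSpace.single l' (1 : ℝ))⟫ : ℝ) : ℂ) •
          LineDeriv.lineDerivOpCLM ℝ (SchwartzMap 𝓔 ℂ) (EuclideanSpace.single k (1:ℝ))
            (LineDeriv.lineDerivOpCLM ℝ (SchwartzMap 𝓔 ℂ) (EuclideanSpace.single l' (1:ℝ)) f))) ξ = 0 → True := fun _ _ _ => trivial
  clear hterm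
  have key : ∀ k l : Fin n,
      𝓕 ⇑(LineDeriv.lineDerivOpCLM ℝ (SchwartzMap 𝓔 ℂ) (EuclideanSpace.single k (1:ℝ))
          (LineDeriv.lineDerivOpCLM ℝ (SchwartzMap 𝓔 ℂ) (EuclideanSpace.single l (1:ℝ)) f)) ξ
        = ((2 * Real.pi * Complex.I) * ((⟪EuclideanSpace.single k (1:ℝ), ξ⟫ : ℝ) : ℂ)) *
          ((2 * Real.pi * Complex.I) * ((⟪EuclideanSpace.single l (1:ℝ), ξ⟫ : ℝ) : ℂ)) *
          𝓕 (⇑f) ξ := by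
    intro k l
    have h1 : ⇑(LineDeriv.lineDerivOpCLM ℝ (SchwartzMap 𝓔 ℂ) (EuclideanSpace.single k (1:ℝ))
        (LineDeriv.lineDerivOpCLM ℝ (SchwartzMap 𝓔 ℂ) (EuclideanSpace.single l (1:ℝ)) f))
        = fun x => fderiv ℝ (⇑(LineDeriv.lineDerivOpCLM ℝ (SchwartzMap 𝓔 ℂ) (EuclideanSpace.single l (1:ℝ)) f)) x
            (EuclideanSpace.single k (1:ℝ)) := rfl
    rw [h1, my_fourier_pderiv,
      show ⇑(LineDeriv.lineDerivOpCLM ℝ (SchwartzMap 𝓔 ℂ) (EuclideanSpace.single l (1:ℝ)) f)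
        = fun x => fderiv ℝ (⇑f) x (EuclideanSpace.single l (1:ℝ)) from rfl,
      my_fourier_pderiv]
    ring
  calc (∑ k : Fin n, (FunLike.coeAddMonoidHom (SchwartzMap 𝓔 ℂ) 𝓔 ℂ) ((fourierTransformCLM ℂ)
        (∑ l : Fin n, ((⟪EuclideanSpace.single k (1 : ℝ),
            B (EuclideanSpace.single l (1 : ℝ))⟫ : ℝ) : ℂ) •
          LineDeriv.lineDerivOpCLM ℝ (SchwartzMap 𝓔 ℂ) (EuclideanSpace.single k (1:ℝ))
            (LineDeriv.lineDerivOpCLM ℝ (SchwartzMap 𝓔 ℂ) (EuclideanSpace.single l (1:ℝ)) f))) ξ)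
      = ∑ k : Fin n, ∑ l : Fin n,
          ((⟪EuclideanSpace.single k (1 : ℝ), B (EuclideanSpace.single l (1 : ℝ))⟫ : ℝ) : ℂ) *
          (((2 * Real.pi * Complex.I) * ((⟪EuclideanSpace.single k (1:ℝ), ξ⟫ : ℝ) : ℂ)) *
          ((2 * Real.pi * Complex.I) * ((⟪EuclideanSpace.single l (1:ℝ), ξ⟫ : ℝ) : ℂ)) *
          𝓕 (⇑f) ξ) := by
        refine Finset.sum_congr rfl fun k _ => ?_
        rw [map_sum, map_sum]
        simp only [Finset.sum_apply]
        refine Finset.sum_congr rfl fun l _ => ?_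
        rw [_root_.map_smul, SchwartzMap.coe_coeHom, SchwartzMap.smul_apply]
        rw [show ⇑((fourierTransformCLM ℂ) (LineDeriv.lineDerivOpCLM ℝ (SchwartzMap 𝓔 ℂ) (EuclideanSpace.single k (1:ℝ))
            (LineDeriv.lineDerivOpCLM ℝ (SchwartzMap 𝓔 ℂ) (EuclideanSpace.single l (1:ℝ)) f)))
          = 𝓕 ⇑(LineDeriv.lineDerivOpCLM ℝ (SchwartzMap 𝓔 ℂ) (EuclideanSpace.single k (1:ℝ))
            (LineDeriv.lineDerivOpCLM ℝ (SchwartzMap 𝓔 ℂ) (EuclideanSpace.single l (1:ℝ)) f)) from rfl, key k l]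
        rw [smul_eq_mul]
    _ = ((∑ k : Fin n, ∑ l : Fin n,
          (⟪EuclideanSpace.single k (1:ℝ), B (EuclideanSpace.single l (1:ℝ))⟫ : ℝ)
            * ξ k * ξ l : ℝ) : ℂ) * (-((2 * Real.pi : ℂ))^2 * 𝓕 (⇑f) ξ) := by
        push_cast
        rw [Finset.sum_mul]
        refine Finset.sum_congr rfl fun k _ => ?_
        rw [Finset.sum_mul]
        refine Finset.sum_congr rfl fun l _ => ?_
        have hk : (⟪EuclideanSpace.single k (1:ℝ), ξ⟫ : ℝ) = ξ k := by
          simp [EuclideanSpace.inner_single_left]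
        have hl : (⟪EuclideanSpace.single l (1:ℝ), ξ⟫ : ℝ) = ξ l := by
          simp [EuclideanSpace.inner_single_left]
        rw [hk, hl]
        ring_nf
        rw [Complex.I_sq]
        ring
    _ = ((-((2 * Real.pi)^2) * ⟪ξ, B ξ⟫ : ℝ) : ℂ) * 𝓕 (⇑f) ξ := by
        rw [my_quad B ξ]
        push_cast
        ring

lemma my_fourier_iter (B : 𝓔 ≃ₗ[ℝ] 𝓔) (f : SchwartzMap 𝓔 ℂ) (m : ℕ) (ξ : 𝓔) :
    𝓕 ⇑((bLapS B)^[m] f) ξ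
      = ((-((2 * Real.pi)^2) * ⟪ξ, B ξ⟫ : ℝ) : ℂ)^m * 𝓕 (⇑f) ξ := by
  induction m with
  | zero => simp
  | succ m ih =>
      rw [Function.iterate_succ_apply', my_fourier_bLapS, ih, pow_succ]
      ring

lemma my_lhs (B : 𝓔 ≃ₗ[ℝ] 𝓔) (f : SchwartzMap 𝓔 ℂ) (m : ℕ) :
    ∫ x : 𝓔, ‖(bLap B)^[m] (⇑f) x‖ ^ 2
      = (2 * Real.pi) ^ (4 * m) * ∫ ξ : 𝓔, ⟪ξ, B ξ⟫ ^ (2 * m) * ‖𝓕 (⇑f) ξ‖ ^ 2 := by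
  have h0 : (fun x : 𝓔 => ‖(bLap B)^[m] (⇑f) x‖ ^ 2)
      = fun x : 𝓔 => ‖((bLapS B)^[m] f) x‖ ^ 2 := by
    funext x; rw [bLapS_iterate_coe]
  rw [h0, ← my_plancherel ((bLapS B)^[m] f)]
  have h1 : (fun ξ : 𝓔 => ‖𝓕 (⇑((bLapS B)^[m] f)) ξ‖ ^ 2)
      = fun ξ : 𝓔 => (2 * Real.pi) ^ (4 * m) * (⟪ξ, B ξ⟫ ^ (2 * m) * ‖𝓕 (⇑f) ξ‖ ^ 2) := by
    funext ξ
    rw [my_fourier_iter, norm_mul, mul_pow, norm_pow, Complex.norm_real, Real.norm_eq_abs,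
      ← pow_mul, mul_comm m 2, pow_mul, _root_.sq_abs]
    have hq : (-((2 * Real.pi)^2) * ⟪ξ, B ξ⟫) ^ 2 = (2 * Real.pi) ^ 4 * ⟪ξ, B ξ⟫ ^ 2 := by ring
    rw [hq, mul_pow, ← pow_mul, ← pow_mul, mul_comm 2 m, ← mul_assoc]
  rw [h1, integral_const_mul]

lemma my_det_adjoint (T : 𝓔 →ₗ[ℝ] 𝓔) :
    LinearMap.det (LinearMap.adjoint T) = LinearMap.det T := by
  classical
  rw [← LinearMap.det_toMatrix (EuclideanSpace.basisFun (Fin n) ℝ).toBasis,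
    ← LinearMap.det_toMatrix (EuclideanSpace.basisFun (Fin n) ℝ).toBasis (f := T),
    LinearMap.toMatrix_adjoint, Matrix.det_conjTranspose]
  simp

lemma my_adjoint_id : LinearMap.adjoint (LinearMap.id : 𝓔 →ₗ[ℝ] 𝓔) = LinearMap.id :=
  ((LinearMap.eq_adjoint_iff (LinearMap.id : 𝓔 →ₗ[ℝ] 𝓔) LinearMap.id).mpr
    (fun _ _ => rfl)).symm

def adjEquiv (B : 𝓔 ≃ₗ[ℝ] 𝓔) : 𝓔 ≃ₗ[ℝ] 𝓔 :=
  LinearEquiv.ofLinear (LinearMap.adjoint (B : 𝓔 →ₗ[ℝ] 𝓔))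
    (LinearMap.adjoint (B.symm : 𝓔 →ₗ[ℝ] 𝓔))
    (by
      rw [← LinearMap.adjoint_comp]
      have : (B.symm : 𝓔 →ₗ[ℝ] 𝓔) ∘ₗ (B : 𝓔 →ₗ[ℝ] 𝓔) = LinearMap.id :=
        LinearMap.ext fun x => B.symm_apply_apply x
      rw [this, my_adjoint_id])
    (by
      rw [← LinearMap.adjoint_comp]
      have : (B : 𝓔 →ₗ[ℝ] 𝓔) ∘ₗ (B.symm : 𝓔 →ₗ[ℝ] 𝓔) = LinearMap.id :=
        LinearMap.ext fun x => B.apply_symm_apply x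
      rw [this, my_adjoint_id])

lemma my_integral_comp (T : 𝓔 ≃ₗ[ℝ] 𝓔) (g : 𝓔 → ℝ) :
    ∫ ξ : 𝓔, g (T ξ) = |LinearMap.det (T : 𝓔 →ₗ[ℝ] 𝓔)|⁻¹ * ∫ ξ : 𝓔, g ξ := by
  have hdet : LinearMap.det (T : 𝓔 →ₗ[ℝ] 𝓔) ≠ 0 := by
    have := LinearEquiv.isUnit_det' T
    exact this.ne_zero
  have hmap : Measure.map (T : 𝓔 →ₗ[ℝ] 𝓔) (volume : Measure 𝓔)
      = ENNReal.ofReal |(LinearMap.det (T : 𝓔 →ₗ[ℝ] 𝓔))⁻¹| • volume :=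
    Measure.map_linearMap_addHaar_eq_smul_addHaar volume hdet
  have hTco : ⇑(T : 𝓔 →ₗ[ℝ] 𝓔) = ⇑T := rfl
  have e : 𝓔 ≃ᵐ 𝓔 := (T.toContinuousLinearEquiv.toHomeomorph).toMeasurableEquiv
  have heco : ⇑((T.toContinuousLinearEquiv.toHomeomorph).toMeasurableEquiv) = ⇑T := rfl
  calc ∫ ξ : 𝓔, g (T ξ)
      = ∫ ξ, g ξ ∂(Measure.map (T : 𝓔 →ₗ[ℝ] 𝓔) volume) := by
        rw [hTco, ← heco, MeasureTheory.integral_map_equiv]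
    _ = |LinearMap.det (T : 𝓔 →ₗ[ℝ] 𝓔)|⁻¹ * ∫ ξ : 𝓔, g ξ := by
        rw [hmap, integral_smul_measure, ENNReal.toReal_ofReal (abs_nonneg _), abs_inv]
        rfl

lemma my_bval (b : 𝓔 →ₗ[ℝ] 𝓔 →ₗ[ℝ] ℝ) (B : 𝓔 ≃ₗ[ℝ] 𝓔)
    (hpair : ∀ x y : 𝓔, ⟪x, y⟫ = b x (B y)) (ξ x : 𝓔) :
    b ξ x = ⟪ξ, B.symm x⟫ := by
  have := hpair ξ (B.symm x)
  rw [B.apply_symm_apply] at this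
  exact this.symm

lemma my_fourierL_eq (b : 𝓔 →ₗ[ℝ] 𝓔 →ₗ[ℝ] ℝ) (B : 𝓔 ≃ₗ[ℝ] 𝓔)
    (hpair : ∀ x y : 𝓔, ⟪x, y⟫ = b x (B y)) (f : 𝓔 → ℂ) (ξ : 𝓔) :
    fourierL b f ξ = 𝓕 f ((adjEquiv B).symm ξ) := by
  rw [Real.fourier_eq']
  unfold fourierL
  congr 1
  funext x
  rw [smul_eq_mul]
  congr 1
  rw [my_bval b B hpair]
  have : ⟪x, (adjEquiv B).symm ξ⟫ = ⟪ξ, B.symm x⟫ := by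
    rw [real_inner_comm]
    exact LinearMap.adjoint_inner_left (B.symm : 𝓔 →ₗ[ℝ] 𝓔) x ξ
  rw [this]
  push_cast
  ring

lemma my_fourierR_eq (b : 𝓔 →ₗ[ℝ] 𝓔 →ₗ[ℝ] ℝ) (B : 𝓔 ≃ₗ[ℝ] 𝓔)
    (hpair : ∀ x y : 𝓔, ⟪x, y⟫ = b x (B y)) (f : 𝓔 → ℂ) (ξ : 𝓔) :
    fourierR b f ξ = 𝓕 f (B.symm ξ) := by
  rw [Real.fourier_eq']
  unfold fourierR
  congr 1
  funext x
  rw [smul_eq_mul]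
  congr 1
  rw [my_bval b B hpair]
  push_cast
  ring


end Aux

/-- `∫ |(Δ_b^m f)(x)|² dx = (2π)^{4m} |det B|⁻¹ ∫ b(ξ,ξ)^{2m} |(𝓕ᴸ_b f)(ξ)|² dξ`,
and the same identity with `𝓕ᴿ_b` in place of `𝓕ᴸ_b`. -/
theorem stmt16 {n : ℕ} (hn : 1 ≤ n)
    (b : EuclideanSpace ℝ (Fin n) →ₗ[ℝ] EuclideanSpace ℝ (Fin n) →ₗ[ℝ] ℝ)
    (hb : ∀ x : EuclideanSpace ℝ (Fin n), (∀ y, b x y = 0) → x = 0)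
    (B : EuclideanSpace ℝ (Fin n) ≃ₗ[ℝ] EuclideanSpace ℝ (Fin n))
    (hpair : ∀ x y : EuclideanSpace ℝ (Fin n), ⟪x, y⟫ = b x (B y))
    (f : SchwartzMap (EuclideanSpace ℝ (Fin n)) ℂ) (m : ℕ) :
    (∫ x : EuclideanSpace ℝ (Fin n), ‖(bLap B)^[m] ⇑f x‖ ^ 2 =
        (2 * Real.pi) ^ (4 * m) *
          |LinearMap.det (B : EuclideanSpace ℝ (Fin n) →ₗ[ℝ] EuclideanSpace ℝ (Fin n))|⁻¹ *
          ∫ ξ : EuclideanSpace ℝ (Fin n), b ξ ξ ^ (2 * m) * ‖fourierL b ⇑f ξ‖ ^ 2) ∧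
      (∫ x : EuclideanSpace ℝ (Fin n), ‖(bLap B)^[m] ⇑f x‖ ^ 2 =
        (2 * Real.pi) ^ (4 * m) *
          |LinearMap.det (B : EuclideanSpace ℝ (Fin n) →ₗ[ℝ] EuclideanSpace ℝ (Fin n))|⁻¹ *
          ∫ ξ : EuclideanSpace ℝ (Fin n), b ξ ξ ^ (2 * m) * ‖fourierR b ⇑f ξ‖ ^ 2) := by
  constructor
  · rw [my_lhs B f m]
    have hcomp : (fun η : EuclideanSpace ℝ (Fin n) => (fun ξ : EuclideanSpace ℝ (Fin n) => b ξ ξ ^ (2 * m) * ‖fourierL b ⇑f ξ‖ ^ 2)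
        ((adjEquiv B) η)) = fun η : EuclideanSpace ℝ (Fin n) => ⟪η, B η⟫ ^ (2 * m) * ‖𝓕 (⇑f) η‖ ^ 2 := by
      funext η
      simp only
      rw [my_fourierL_eq b B hpair, LinearEquiv.symm_apply_apply]
      congr 2
      rw [my_bval b B hpair]
      have h1 : (adjEquiv B) η = LinearMap.adjoint (B : EuclideanSpace ℝ (Fin n) →ₗ[ℝ] EuclideanSpace ℝ (Fin n)) η := rfl
      rw [h1, LinearMap.adjoint_inner_left (B : EuclideanSpace ℝ (Fin n) →ₗ[ℝ] EuclideanSpace ℝ (Fin n))]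
      have h2 : (B : EuclideanSpace ℝ (Fin n) →ₗ[ℝ] EuclideanSpace ℝ (Fin n)) (B.symm ((LinearMap.adjoint (B : EuclideanSpace ℝ (Fin n) →ₗ[ℝ] EuclideanSpace ℝ (Fin n))) η))
          = (LinearMap.adjoint (B : EuclideanSpace ℝ (Fin n) →ₗ[ℝ] EuclideanSpace ℝ (Fin n))) η := B.apply_symm_apply _
      rw [h2, LinearMap.adjoint_inner_right]
      exact real_inner_comm _ _
    have hint := my_integral_comp (adjEquiv B)
      (fun ξ : EuclideanSpace ℝ (Fin n) => b ξ ξ ^ (2 * m) * ‖fourierL b ⇑f ξ‖ ^ 2)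
    rw [hcomp] at hint
    have hdet : LinearMap.det ((adjEquiv B) : EuclideanSpace ℝ (Fin n) →ₗ[ℝ] EuclideanSpace ℝ (Fin n))
        = LinearMap.det (B : EuclideanSpace ℝ (Fin n) →ₗ[ℝ] EuclideanSpace ℝ (Fin n)) := by
      have : ((adjEquiv B) : EuclideanSpace ℝ (Fin n) →ₗ[ℝ] EuclideanSpace ℝ (Fin n)) = LinearMap.adjoint (B : EuclideanSpace ℝ (Fin n) →ₗ[ℝ] EuclideanSpace ℝ (Fin n)) := rfl
      rw [this, my_det_adjoint]
    rw [hdet] at hint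
    rw [hint]
    ring
  · rw [my_lhs B f m]
    have hcomp : (fun η : EuclideanSpace ℝ (Fin n) => (fun ξ : EuclideanSpace ℝ (Fin n) => b ξ ξ ^ (2 * m) * ‖fourierR b ⇑f ξ‖ ^ 2)
        (B η)) = fun η : EuclideanSpace ℝ (Fin n) => ⟪η, B η⟫ ^ (2 * m) * ‖𝓕 (⇑f) η‖ ^ 2 := by
      funext η
      simp only
      rw [my_fourierR_eq b B hpair, B.symm_apply_apply]
      congr 2
      rw [my_bval b B hpair, B.symm_apply_apply, real_inner_comm]
    have hint := my_integral_comp B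
      (fun ξ : EuclideanSpace ℝ (Fin n) => b ξ ξ ^ (2 * m) * ‖fourierR b ⇑f ξ‖ ^ 2)
    rw [hcomp] at hint
    rw [hint]
    ring
end
end

section
/- Let b be a positive definite geometric structure on ℝⁿ with geometric pair (b, B), and let s ∈ (0,1). Then for every f ∈ 𝒮(ℝⁿ) and every x ∈ ℝⁿ the following three (absolutely convergent) integrals are equal: |det B|⁻¹ · ∫_{ℝⁿ} e^{2πi b(ξ,x)} (4π² b(ξ,ξ))^s (𝓕ᴸ_b f)(ξ) dξ = |det B|⁻¹ · ∫_{ℝⁿ} e^{2πi b(x,ξ)} (4π² b(ξ,ξ))^s (𝓕ᴿ_b f)(ξ) dξ = (4π²)^s · ∫_{ℝⁿ} e^{2πi ⟨x,ζ⟩} ⟨ζ, Bζ⟩^s (𝓕 f)(ζ) dζ. (In particular the left and right geometric fractional Laplacians (-Δ_b)^s_L and (-Δ_b)^s_R coincide and are given by the pseudo-differential operator with symbol (4π² ⟨ζ, Bζ⟩)^s.) -/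
open MeasureTheory Complex
open scoped RealInnerProductSpace FourierTransform
noncomputable section

variable {n : ℕ}
local notation "Eu" => EuclideanSpace ℝ (Fin n)

lemma map_volume_lequiv (L : Eu ≃ₗ[ℝ] Eu) :
    (volume : Measure Eu).map L
      = ENNReal.ofReal |LinearMap.det (L : Eu →ₗ[ℝ] Eu)|⁻¹ • volume := by
  have hdet : LinearMap.det (L : Eu →ₗ[ℝ] Eu) ≠ 0 := L.isUnit_det'.ne_zero
  have := Measure.map_linearMap_addHaar_eq_smul_addHaar (volume : Measure Eu) hdet
  simpa [abs_inv] using this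

lemma integrable_comp_lequiv (L : Eu ≃ₗ[ℝ] Eu) {g : Eu → ℂ}
    (hg : Integrable g) : Integrable (fun x => g (L x)) := by
  have hdet : LinearMap.det (L : Eu →ₗ[ℝ] Eu) ≠ 0 := L.isUnit_det'.ne_zero
  let e : Eu ≃ᵐ Eu := L.toContinuousLinearEquiv.toHomeomorph.toMeasurableEquiv
  have h1 : Integrable g ((volume : Measure Eu).map e) := by
    rw [show ((volume : Measure Eu).map e) = (volume : Measure Eu).map L from rfl,
      map_volume_lequiv]
    refine (integrable_smul_measure ?_ (by simp)).2 hg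
    simp [hdet, abs_eq_zero]
  exact (integrable_map_equiv e g).1 h1

lemma integral_comp_lequiv (L : Eu ≃ₗ[ℝ] Eu) (g : Eu → ℂ) :
    ∫ x, g (L x) = |LinearMap.det (L : Eu →ₗ[ℝ] Eu)|⁻¹ • ∫ y, g y := by
  let e : Eu ≃ᵐ Eu := L.toContinuousLinearEquiv.toHomeomorph.toMeasurableEquiv
  have h1 : ∫ x, g (L x) = ∫ y, g y ∂((volume : Measure Eu).map e) :=
    (integral_map_equiv e g).symm
  rw [h1, show ((volume : Measure Eu).map e) = (volume : Measure Eu).map L from rfl,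
    map_volume_lequiv, integral_smul_measure, ENNReal.toReal_ofReal (by positivity)]

lemma det_adjoint (A : Eu →ₗ[ℝ] Eu) :
    LinearMap.det (LinearMap.adjoint A) = LinearMap.det A := by
  classical
  let v := EuclideanSpace.basisFun (Fin n) ℝ
  rw [← LinearMap.det_toMatrix v.toBasis (LinearMap.adjoint A),
    ← LinearMap.det_toMatrix v.toBasis A, LinearMap.toMatrix_adjoint,
    Matrix.det_conjTranspose, star_trivial]

/-- for a positive definite geometric structure `b` and `s ∈ (0,1)`,
the three absolutely convergent integrals defining the left and right geometric fractional
Laplacians and the pseudo-differential operator with symbol `(4π²⟨ζ,Bζ⟩)^s` coincide: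
`|det B|⁻¹ ∫ e^{2πi b(ξ,x)} (4π² b(ξ,ξ))^s (𝓕ᴸ_b f)(ξ) dξ
  = |det B|⁻¹ ∫ e^{2πi b(x,ξ)} (4π² b(ξ,ξ))^s (𝓕ᴿ_b f)(ξ) dξ
  = (4π²)^s ∫ e^{2πi⟨x,ζ⟩} ⟨ζ,Bζ⟩^s (𝓕f)(ζ) dζ`. -/
theorem stmt18 {n : ℕ} (hn : 1 ≤ n)
    (b : EuclideanSpace ℝ (Fin n) →ₗ[ℝ] EuclideanSpace ℝ (Fin n) →ₗ[ℝ] ℝ)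
    (hb : ∀ x : EuclideanSpace ℝ (Fin n), (∀ y, b x y = 0) → x = 0)
    (hpos : ∀ x : EuclideanSpace ℝ (Fin n), x ≠ 0 → 0 < b x x)
    (B : EuclideanSpace ℝ (Fin n) ≃ₗ[ℝ] EuclideanSpace ℝ (Fin n))
    (hpair : ∀ x y : EuclideanSpace ℝ (Fin n), ⟪x, y⟫ = b x (B y))
    (s : ℝ) (hs : s ∈ Set.Ioo (0 : ℝ) 1)
    (f : SchwartzMap (EuclideanSpace ℝ (Fin n)) ℂ) (x : EuclideanSpace ℝ (Fin n)) :
    Integrable (fun ξ : EuclideanSpace ℝ (Fin n) =>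
      Complex.exp ((2 * Real.pi * Complex.I) * (b ξ x : ℂ)) *
        (((4 * Real.pi ^ 2 * b ξ ξ) ^ s : ℝ) : ℂ) * fourierL b ⇑f ξ) ∧
    Integrable (fun ξ : EuclideanSpace ℝ (Fin n) =>
      Complex.exp ((2 * Real.pi * Complex.I) * (b x ξ : ℂ)) *
        (((4 * Real.pi ^ 2 * b ξ ξ) ^ s : ℝ) : ℂ) * fourierR b ⇑f ξ) ∧
    Integrable (fun ζ : EuclideanSpace ℝ (Fin n) =>
      Complex.exp ((2 * Real.pi * Complex.I) * (⟪x, ζ⟫ : ℂ)) *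
        (((⟪ζ, B ζ⟫ ^ s : ℝ)) : ℂ) * FourierTransform.fourier (⇑f : EuclideanSpace ℝ (Fin n) → ℂ) ζ) ∧
    (((|LinearMap.det (B : EuclideanSpace ℝ (Fin n) →ₗ[ℝ] EuclideanSpace ℝ (Fin n))|⁻¹ : ℝ) : ℂ) *
        ∫ ξ : EuclideanSpace ℝ (Fin n),
          Complex.exp ((2 * Real.pi * Complex.I) * (b ξ x : ℂ)) *
            (((4 * Real.pi ^ 2 * b ξ ξ) ^ s : ℝ) : ℂ) * fourierL b ⇑f ξ =
      ((|LinearMap.det (B : EuclideanSpace ℝ (Fin n) →ₗ[ℝ] EuclideanSpace ℝ (Fin n))|⁻¹ : ℝ) : ℂ) *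
        ∫ ξ : EuclideanSpace ℝ (Fin n),
          Complex.exp ((2 * Real.pi * Complex.I) * (b x ξ : ℂ)) *
            (((4 * Real.pi ^ 2 * b ξ ξ) ^ s : ℝ) : ℂ) * fourierR b ⇑f ξ) ∧
    (((|LinearMap.det (B : EuclideanSpace ℝ (Fin n) →ₗ[ℝ] EuclideanSpace ℝ (Fin n))|⁻¹ : ℝ) : ℂ) *
        ∫ ξ : EuclideanSpace ℝ (Fin n),
          Complex.exp ((2 * Real.pi * Complex.I) * (b x ξ : ℂ)) *
            (((4 * Real.pi ^ 2 * b ξ ξ) ^ s : ℝ) : ℂ) * fourierR b ⇑f ξ =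
      ((((4 * Real.pi ^ 2) ^ s : ℝ)) : ℂ) *
        ∫ ζ : EuclideanSpace ℝ (Fin n),
          Complex.exp ((2 * Real.pi * Complex.I) * (⟪x, ζ⟫ : ℂ)) *
            (((⟪ζ, B ζ⟫ ^ s : ℝ)) : ℂ) * FourierTransform.fourier (⇑f : EuclideanSpace ℝ (Fin n) → ℂ) ζ) := by
  obtain ⟨hs0, hs1⟩ := hs
  -- basic identities
  have hbB : ∀ u z : EuclideanSpace ℝ (Fin n), b u z = ⟪u, B.symm z⟫ := by
    intro u z
    have := hpair u (B.symm z)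
    rw [B.apply_symm_apply] at this
    exact this.symm
  have hnnb : ∀ u : EuclideanSpace ℝ (Fin n), 0 ≤ b u u := by
    intro u
    rcases eq_or_ne u 0 with h | h
    · simp [h]
    · exact (hpos u h).le
  have hnn : ∀ ζ : EuclideanSpace ℝ (Fin n), 0 ≤ ⟪ζ, B ζ⟫ := by
    intro ζ
    have h1 : b (B ζ) (B ζ) = ⟪B ζ, ζ⟫ := by rw [hbB, B.symm_apply_apply]
    have h2 : ⟪ζ, B ζ⟫ = ⟪B ζ, ζ⟫ := real_inner_comm _ _
    rw [h2, ← h1]; exact hnnb _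
  -- the adjoint equivalence C with C = adjoint (B.symm)
  have hadj_id : LinearMap.adjoint (LinearMap.id : EuclideanSpace ℝ (Fin n) →ₗ[ℝ] EuclideanSpace ℝ (Fin n)) = LinearMap.id := by
    rw [← LinearMap.star_eq_adjoint, ← Module.End.one_eq_id, star_one]
  have hBB : (B : EuclideanSpace ℝ (Fin n) →ₗ[ℝ] EuclideanSpace ℝ (Fin n)) ∘ₗ (B.symm : EuclideanSpace ℝ (Fin n) →ₗ[ℝ] EuclideanSpace ℝ (Fin n)) = LinearMap.id :=
    LinearMap.ext fun z => B.apply_symm_apply z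
  have hBB' : (B.symm : EuclideanSpace ℝ (Fin n) →ₗ[ℝ] EuclideanSpace ℝ (Fin n)) ∘ₗ (B : EuclideanSpace ℝ (Fin n) →ₗ[ℝ] EuclideanSpace ℝ (Fin n)) = LinearMap.id :=
    LinearMap.ext fun z => B.symm_apply_apply z
  let C : EuclideanSpace ℝ (Fin n) ≃ₗ[ℝ] EuclideanSpace ℝ (Fin n) := LinearEquiv.ofLinear
    (LinearMap.adjoint (B.symm : EuclideanSpace ℝ (Fin n) →ₗ[ℝ] EuclideanSpace ℝ (Fin n))) (LinearMap.adjoint (B : EuclideanSpace ℝ (Fin n) →ₗ[ℝ] EuclideanSpace ℝ (Fin n)))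
    (by rw [← LinearMap.adjoint_comp, hBB, hadj_id])
    (by rw [← LinearMap.adjoint_comp, hBB', hadj_id])
  have hC : ∀ ξ : EuclideanSpace ℝ (Fin n), C ξ = LinearMap.adjoint (B.symm : EuclideanSpace ℝ (Fin n) →ₗ[ℝ] EuclideanSpace ℝ (Fin n)) ξ := fun _ => rfl
  have hCdet : LinearMap.det (C : EuclideanSpace ℝ (Fin n) →ₗ[ℝ] EuclideanSpace ℝ (Fin n))
      = LinearMap.det (B.symm : EuclideanSpace ℝ (Fin n) →ₗ[ℝ] EuclideanSpace ℝ (Fin n)) := det_adjoint _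
  -- determinants
  set dB : ℝ := LinearMap.det (B : EuclideanSpace ℝ (Fin n) →ₗ[ℝ] EuclideanSpace ℝ (Fin n)) with hdB
  have hdB0 : dB ≠ 0 := B.isUnit_det'.ne_zero
  have hdsymm : LinearMap.det (B.symm : EuclideanSpace ℝ (Fin n) →ₗ[ℝ] EuclideanSpace ℝ (Fin n)) = dB⁻¹ := by
    have h := LinearMap.det_comp (B.symm : EuclideanSpace ℝ (Fin n) →ₗ[ℝ] EuclideanSpace ℝ (Fin n)) (B : EuclideanSpace ℝ (Fin n) →ₗ[ℝ] EuclideanSpace ℝ (Fin n))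
    rw [hBB', LinearMap.det_id] at h
    exact eq_inv_of_mul_eq_one_left h.symm
  -- inner product identities
  have hCinner : ∀ (ξ z : EuclideanSpace ℝ (Fin n)), ⟪C ξ, z⟫ = b ξ z := by
    intro ξ z
    rw [hC, LinearMap.adjoint_inner_left]
    exact (hbB ξ z).symm
  have hbx : ∀ ξ : EuclideanSpace ℝ (Fin n), b ξ x = ⟪x, C ξ⟫ := fun ξ => by
    rw [real_inner_comm, hCinner]
  have hbxx : ∀ ξ : EuclideanSpace ℝ (Fin n), b ξ ξ = ⟪C ξ, B (C ξ)⟫ := by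
    intro ξ
    calc b ξ ξ = ⟪C ξ, ξ⟫ := (hCinner ξ ξ).symm
      _ = ⟪ξ, C ξ⟫ := real_inner_comm _ _
      _ = ⟪ξ, B.symm (B (C ξ))⟫ := by rw [B.symm_apply_apply]
      _ = b ξ (B (C ξ)) := (hbB _ _).symm
      _ = ⟪C ξ, B (C ξ)⟫ := (hCinner _ _).symm
  -- the Fourier transform of f as a Schwartz map
  set T : SchwartzMap (EuclideanSpace ℝ (Fin n)) ℂ := SchwartzMap.fourierTransformCLM ℂ f with hTdef
  have hT : ⇑T = FourierTransform.fourier (⇑f : EuclideanSpace ℝ (Fin n) → ℂ) := by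
    rw [hTdef, SchwartzMap.fourierTransformCLM_apply, SchwartzMap.fourier_coe]
  -- the exp conversion
  have key : ∀ (r : ℝ) (z : ℂ),
      Complex.exp (-(2 * Real.pi * Complex.I) * (r : ℂ)) * z
        = Complex.exp (((-2 * Real.pi * r : ℝ) : ℂ) * Complex.I) • z := by
    intro r z
    rw [smul_eq_mul]
    congr 1
    push_cast
    ring
  -- fourierL and fourierR as classical Fourier transforms
  have hFL : ∀ ξ : EuclideanSpace ℝ (Fin n), fourierL b ⇑f ξ = FourierTransform.fourier (⇑f : EuclideanSpace ℝ (Fin n) → ℂ) (C ξ) := by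
    intro ξ
    rw [Real.fourier_eq']
    unfold fourierL
    congr 1
    funext v
    rw [show b ξ v = ⟪v, C ξ⟫ by rw [real_inner_comm, hCinner], key]
  have hFR : ∀ ξ : EuclideanSpace ℝ (Fin n), fourierR b ⇑f ξ = FourierTransform.fourier (⇑f : EuclideanSpace ℝ (Fin n) → ℂ) (B.symm ξ) := by
    intro ξ
    rw [Real.fourier_eq']
    unfold fourierR
    congr 1
    funext v
    rw [show b v ξ = ⟪v, B.symm ξ⟫ from hbB v ξ, key]
  -- the common integrand t and its scaled version g
  set t : EuclideanSpace ℝ (Fin n) → ℂ := fun ζ =>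
    Complex.exp ((2 * Real.pi * Complex.I) * (⟪x, ζ⟫ : ℂ)) *
      (((⟪ζ, B ζ⟫ ^ s : ℝ)) : ℂ) * FourierTransform.fourier (⇑f : EuclideanSpace ℝ (Fin n) → ℂ) ζ with htdef
  set g : EuclideanSpace ℝ (Fin n) → ℂ := fun ζ =>
    Complex.exp ((2 * Real.pi * Complex.I) * (⟪x, ζ⟫ : ℂ)) *
      (((4 * Real.pi ^ 2 * ⟪ζ, B ζ⟫) ^ s : ℝ) : ℂ) * FourierTransform.fourier (⇑f : EuclideanSpace ℝ (Fin n) → ℂ) ζ with hgdef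
  have hgt : g = fun ζ => (((4 * Real.pi ^ 2) ^ s : ℝ) : ℂ) * t ζ := by
    funext ζ
    rw [hgdef, htdef]
    simp only
    rw [Real.mul_rpow (by positivity) (hnn ζ)]
    push_cast
    ring
  -- continuity of t
  have hBcont : Continuous (⇑B : EuclideanSpace ℝ (Fin n) → EuclideanSpace ℝ (Fin n)) := (B : EuclideanSpace ℝ (Fin n) →ₗ[ℝ] EuclideanSpace ℝ (Fin n)).continuous_of_finiteDimensional
  have hqcont : Continuous fun ζ : EuclideanSpace ℝ (Fin n) => ⟪ζ, B ζ⟫ := continuous_id.inner hBcont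
  have htcont : Continuous t := by
    rw [htdef]
    apply Continuous.mul
    apply Continuous.mul
    · exact Complex.continuous_exp.comp
        (continuous_const.mul (Complex.continuous_ofReal.comp (continuous_const.inner continuous_id)))
    · exact Complex.continuous_ofReal.comp
        (hqcont.rpow_const fun ζ => Or.inr hs0.le)
    · rw [← hT]; exact T.continuous
  -- integrability of t
  set Bc : EuclideanSpace ℝ (Fin n) →L[ℝ] EuclideanSpace ℝ (Fin n) := LinearMap.toContinuousLinearMap (B : EuclideanSpace ℝ (Fin n) →ₗ[ℝ] EuclideanSpace ℝ (Fin n)) with hBcdef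
  have hBc : ∀ ζ : EuclideanSpace ℝ (Fin n), Bc ζ = B ζ := fun _ => rfl
  set M : ℝ := ‖Bc‖ with hM
  have hM0 : 0 ≤ M := norm_nonneg _
  have hbound : ∀ ζ : EuclideanSpace ℝ (Fin n), ⟪ζ, B ζ⟫ ^ s ≤ M ^ s * (1 + ‖ζ‖ ^ 2) := by
    intro ζ
    have h1 : ⟪ζ, B ζ⟫ ≤ M * ‖ζ‖ ^ 2 := by
      calc ⟪ζ, B ζ⟫ ≤ ‖ζ‖ * ‖B ζ‖ := real_inner_le_norm _ _
        _ ≤ ‖ζ‖ * (M * ‖ζ‖) := by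
            apply mul_le_mul_of_nonneg_left _ (norm_nonneg ζ)
            rw [← hBc]; exact Bc.le_opNorm ζ
        _ = M * ‖ζ‖ ^ 2 := by ring
    have h2 : ⟪ζ, B ζ⟫ ^ s ≤ (M * ‖ζ‖ ^ 2) ^ s := Real.rpow_le_rpow (hnn ζ) h1 hs0.le
    have h3 : (M * ‖ζ‖ ^ 2) ^ s = M ^ s * (‖ζ‖ ^ 2) ^ s :=
      Real.mul_rpow hM0 (by positivity)
    have h4 : (‖ζ‖ ^ 2) ^ s ≤ 1 + ‖ζ‖ ^ 2 := by
      set a : ℝ := ‖ζ‖ ^ 2 with ha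
      have ha0 : 0 ≤ a := by positivity
      rcases le_or_gt a 1 with h | h
      · have := Real.rpow_le_one ha0 h hs0.le
        linarith
      · have h5 : a ^ s ≤ a ^ (1 : ℝ) :=
          Real.rpow_le_rpow_of_exponent_le h.le hs1.le
        rw [Real.rpow_one] at h5
        linarith
    calc ⟪ζ, B ζ⟫ ^ s ≤ M ^ s * (‖ζ‖ ^ 2) ^ s := by rw [← h3]; exact h2
      _ ≤ M ^ s * (1 + ‖ζ‖ ^ 2) :=
        mul_le_mul_of_nonneg_left h4 (Real.rpow_nonneg hM0 s)
  have hmaj : Integrable (fun ζ : EuclideanSpace ℝ (Fin n) => M ^ s * ((1 + ‖ζ‖ ^ 2) * ‖T ζ‖)) := by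
    have i1 : Integrable (fun ζ : EuclideanSpace ℝ (Fin n) => ‖T ζ‖) := T.integrable.norm
    have i2 : Integrable (fun ζ : EuclideanSpace ℝ (Fin n) => ‖ζ‖ ^ 2 * ‖T ζ‖) := T.integrable_pow_mul volume 2
    have := (i1.add i2).const_mul (M ^ s)
    refine this.congr (Filter.Eventually.of_forall fun ζ => ?_)
    simp only [Pi.add_apply]
    ring
  have ht : Integrable t := by
    refine hmaj.mono' htcont.aestronglyMeasurable (Filter.Eventually.of_forall fun ζ => ?_)
    rw [htdef]
    simp only [norm_mul]
    have he : ‖Complex.exp (2 * ↑Real.pi * Complex.I * (⟪x, ζ⟫ : ℂ))‖ = 1 := by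
      rw [Complex.norm_exp]
      have : (2 * ↑Real.pi * Complex.I * (⟪x, ζ⟫ : ℂ)).re = 0 := by
        simp [Complex.mul_re, Complex.mul_im]
      rw [this, Real.exp_zero]
    rw [he, one_mul, Complex.norm_real, Real.norm_eq_abs,
      _root_.abs_of_nonneg (Real.rpow_nonneg (hnn ζ) s), ← hT]
    calc ⟪ζ, B ζ⟫ ^ s * ‖T ζ‖ ≤ (M ^ s * (1 + ‖ζ‖ ^ 2)) * ‖T ζ‖ :=
        mul_le_mul_of_nonneg_right (hbound ζ) (norm_nonneg _)
      _ = M ^ s * ((1 + ‖ζ‖ ^ 2) * ‖T ζ‖) := by ring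
  have hg : Integrable g := by
    rw [hgt]; exact ht.const_mul _
  -- rewriting the left and right integrands
  have hleft : (fun ξ : EuclideanSpace ℝ (Fin n) =>
      Complex.exp ((2 * Real.pi * Complex.I) * (b ξ x : ℂ)) *
        (((4 * Real.pi ^ 2 * b ξ ξ) ^ s : ℝ) : ℂ) * fourierL b ⇑f ξ)
      = fun ξ => g (C ξ) := by
    funext ξ
    simp only [hgdef]
    rw [hbx ξ, hbxx ξ, hFL ξ]
  have hbxx' : ∀ ξ : EuclideanSpace ℝ (Fin n), b ξ ξ = ⟪B.symm ξ, B (B.symm ξ)⟫ := by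
    intro ξ
    rw [B.apply_symm_apply, real_inner_comm]
    exact hbB ξ ξ
  have hright : (fun ξ : EuclideanSpace ℝ (Fin n) =>
      Complex.exp ((2 * Real.pi * Complex.I) * (b x ξ : ℂ)) *
        (((4 * Real.pi ^ 2 * b ξ ξ) ^ s : ℝ) : ℂ) * fourierR b ⇑f ξ)
      = fun ξ => g (B.symm ξ) := by
    funext ξ
    simp only [hgdef]
    rw [hbB x ξ, hbxx' ξ, hFR ξ]
  have hCdet' : |LinearMap.det (C : EuclideanSpace ℝ (Fin n) →ₗ[ℝ] EuclideanSpace ℝ (Fin n))|⁻¹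
      = |dB| := by
    rw [hCdet, hdsymm, abs_inv, inv_inv]
  have hint : ∫ ζ, g ζ = (((4 * Real.pi ^ 2) ^ s : ℝ) : ℂ) * ∫ ζ, t ζ := by
    simp only [hgt]
    exact integral_const_mul _ _
  refine ⟨?_, ?_, ?_, ?_, ?_⟩
  · rw [hleft]; exact integrable_comp_lequiv C hg
  · rw [hright]; exact integrable_comp_lequiv B.symm hg
  · exact ht
  · rw [hleft, hright, integral_comp_lequiv C g, integral_comp_lequiv B.symm g, hCdet',
      hdsymm, abs_inv, inv_inv]
  · rw [hright, integral_comp_lequiv B.symm g, hdsymm, abs_inv, inv_inv,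
      Complex.real_smul, hint, ← mul_assoc, ← Complex.ofReal_mul,
      inv_mul_cancel₀ (abs_ne_zero.2 hdB0), Complex.ofReal_one, one_mul]
end
end
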